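/- For any n ≥ 1 and any Hessenberg function h: [n] → [n], the sequence {f_{h(1),1}, f_{h(2),2}, ..., f_{h(n),n}} is a regular sequence in ℚ[x_1,...,x_n]. -/

import Mathlib

open MvPolynomial

/-- The variable `x_m` (1-indexed) in `ℚ[x_1,…,x_n]`. -/
noncomputable def xv (n : ℕ) (m : ℕ) : MvPolynomial (Fin n) ℚ :=
  if h : m - 1 < n then X ⟨m - 1, h⟩ else 0

/-- `f_{i,j} = ∑_{k=1}^{j} (∏_{ℓ=j+1}^{i} (x_k - x_ℓ)) x_k`. -/
noncomputable def fpoly (n i j : ℕ) : MvPolynomial (Fin n) ℚ :=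
  ∑ k ∈ Finset.Icc 1 j, (∏ l ∈ Finset.Icc (j+1) i, (xv n k - xv n l)) * xv n k

/-- `g_{i,j} = ∑_{k=1}^{j} ∏_{ℓ=j+1}^{i} (x_k - x_ℓ)`. -/
noncomputable def gpoly (n i j : ℕ) : MvPolynomial (Fin n) ℚ :=
  ∑ k ∈ Finset.Icc 1 j, ∏ l ∈ Finset.Icc (j+1) i, (xv n k - xv n l)

/-- `h` is a Hessenberg function on `{1,…,n}`. -/
def IsHessenberg (n : ℕ) (h : ℕ → ℕ) : Prop :=
  (∀ i, 1 ≤ i → i ≤ n → i ≤ h i ∧ h i ≤ n) ∧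
  (∀ i, 1 ≤ i → i < n → h i ≤ h (i + 1))



open RingTheory.Sequence Function Submodule Pointwise

section Aux

universe u v

variable {R : Type u} [CommRing R]

/-- If `bs` is weakly regular on both ends of a short exact sequence, it is weakly
regular on the middle. -/
lemma wr_of_exact : ∀ (bs : List R) (M₁ M₂ M₃ : Type v)
    [AddCommGroup M₁] [AddCommGroup M₂] [AddCommGroup M₃]
    [Module R M₁] [Module R M₂] [Module R M₃]
    (f : M₁ →ₗ[R] M₂) (g : M₂ →ₗ[R] M₃),
    Function.Injective f → Function.Exact f g → Function.Surjective g →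
    IsWeaklyRegular M₁ bs → IsWeaklyRegular M₃ bs → IsWeaklyRegular M₂ bs
  | [] => fun M₁ M₂ M₃ _ _ _ _ _ _ _ _ _ _ _ _ _ => IsWeaklyRegular.nil _ _
  | b :: bs => fun M₁ M₂ M₃ _ _ _ _ _ _ f g hf hfg hg h1 h3 => by
    rw [isWeaklyRegular_cons_iff] at h1 h3 ⊢
    obtain ⟨h1a, h1b⟩ := h1
    obtain ⟨h3a, h3b⟩ := h3
    have hreg : IsSMulRegular M₂ b := by
      intro x y hxy
      change b • x = b • y at hxy
      have hgxy : g (x - y) = 0 := by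
        rw [map_sub, sub_eq_zero]
        exact h3a (show b • g x = b • g y by rw [← map_smul, ← map_smul, hxy])
      obtain ⟨z, hz⟩ := (hfg (x - y)).mp hgxy
      have hbz : f (b • z) = 0 := by
        rw [map_smul, hz, smul_sub, hxy, sub_self]
      have hbz0 : b • z = 0 := hf (show f (b • z) = f 0 by rw [hbz, map_zero])
      have hz0 : z = 0 := h1a (show b • z = b • (0 : M₁) by rw [hbz0, smul_zero])
      have : x - y = 0 := by rw [← hz, hz0, map_zero]
      exact sub_eq_zero.mp this
    refine ⟨hreg, ?_⟩
    have e0 : Function.Exact (0 : M₁ →ₗ[R] M₁) f := by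
      intro y
      constructor
      · intro hy
        have : y = 0 := hf (by rw [hy, map_zero])
        exact ⟨0, by simp [this]⟩
      · rintro ⟨z, rfl⟩; simp
    have e3 : Function.Exact g (0 : M₃ →ₗ[R] M₃) := by
      intro y; simpa using hg y
    have einj' := QuotSMulTop.map_first_exact_on_four_term_exact_of_isSMulRegular_last
      (r := b) e0 hfg h3a
    have hmap0 : QuotSMulTop.map b (0 : M₁ →ₗ[R] M₁) = 0 := map_zero _
    have hinj : Function.Injective (QuotSMulTop.map b f) := by
      intro x y hxy
      have : QuotSMulTop.map b f (x - y) = 0 := by rw [map_sub, hxy, sub_self]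
      obtain ⟨z, hz⟩ := (einj' (x - y)).mp this
      rw [hmap0] at hz
      simpa [sub_eq_zero] using hz.symm
    have hexact : Function.Exact (QuotSMulTop.map b f) (QuotSMulTop.map b g) :=
      QuotSMulTop.map_first_exact_on_four_term_exact_of_isSMulRegular_last
        (r := b) hfg e3 h3a
    have hsurj : Function.Surjective (QuotSMulTop.map b g) :=
      QuotSMulTop.map_surjective b hg
    exact wr_of_exact bs _ _ _ _ _ hinj hexact hsurj h1b h3b

/-- If `a :: bs` and `c :: bs` are weakly regular, so is `(a*c) :: bs`. -/
lemma wr_mul {M : Type v} [AddCommGroup M] [Module R M] {a c : R} {bs : List R}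
    (ha : IsWeaklyRegular M (a :: bs)) (hc : IsWeaklyRegular M (c :: bs)) :
    IsWeaklyRegular M ((a * c) :: bs) := by
  rw [isWeaklyRegular_cons_iff] at ha hc ⊢
  obtain ⟨ha1, ha2⟩ := ha
  obtain ⟨hc1, hc2⟩ := hc
  refine ⟨ha1.mul hc1, ?_⟩
  have hle1 : (a • ⊤ : Submodule R M) ≤
      ((a * c) • ⊤ : Submodule R M).comap (LinearMap.lsmul R M c) := by
    intro x hx
    obtain ⟨y, -, rfl⟩ := Set.mem_smul_set.mp hx
    have : c • a • y = (a * c) • y := by rw [smul_smul, mul_comm]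
    exact Submodule.mem_comap.mpr (by
      show LinearMap.lsmul R M c (a • y) ∈ _
      rw [LinearMap.lsmul_apply, this]
      exact smul_mem_pointwise_smul y (a*c) ⊤ trivial)
  have hle2 : ((a * c) • ⊤ : Submodule R M) ≤
      (c • ⊤ : Submodule R M).comap (LinearMap.id) := by
    intro x hx
    obtain ⟨y, -, rfl⟩ := Set.mem_smul_set.mp hx
    have : (a * c) • y = c • a • y := by rw [smul_smul, mul_comm]
    exact Submodule.mem_comap.mpr (by
      show (a*c) • y ∈ _
      rw [this]
      exact smul_mem_pointwise_smul _ c ⊤ trivial)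
  set φ : QuotSMulTop a M →ₗ[R] QuotSMulTop (a * c) M :=
    Submodule.mapQ _ _ (LinearMap.lsmul R M c) hle1 with hφ
  set π : QuotSMulTop (a * c) M →ₗ[R] QuotSMulTop c M :=
    Submodule.mapQ _ _ (LinearMap.id) hle2 with hπ
  have hinj : Function.Injective φ := by
    intro x y hxy
    obtain ⟨u, rfl⟩ := Submodule.Quotient.mk_surjective _ x
    obtain ⟨v, rfl⟩ := Submodule.Quotient.mk_surjective _ y
    rw [hφ, Submodule.mapQ_apply, Submodule.mapQ_apply, Submodule.Quotient.eq] at hxy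
    obtain ⟨w, -, hw⟩ := Set.mem_smul_set.mp hxy
    simp only [LinearMap.lsmul_apply] at hw
    rw [Submodule.Quotient.eq]
    have hcuv : c • (u - v) = c • (a • w) := by
      rw [smul_sub, ← hw, smul_smul, mul_comm c a]
    have := hc1 hcuv
    rw [this]
    exact smul_mem_pointwise_smul _ a ⊤ trivial
  have hexact : Function.Exact φ π := by
    intro x
    obtain ⟨u, rfl⟩ := Submodule.Quotient.mk_surjective _ x
    constructor
    · intro hu
      rw [hπ, Submodule.mapQ_apply, LinearMap.id_apply,
        Submodule.Quotient.mk_eq_zero] at hu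
      obtain ⟨w, -, hw⟩ := Set.mem_smul_set.mp hu
      refine ⟨Submodule.Quotient.mk w, ?_⟩
      rw [hφ, Submodule.mapQ_apply, LinearMap.lsmul_apply, hw]
    · rintro ⟨z, hz⟩
      obtain ⟨w, rfl⟩ := Submodule.Quotient.mk_surjective _ z
      rw [hφ, Submodule.mapQ_apply, LinearMap.lsmul_apply] at hz
      have : π (Submodule.Quotient.mk u) = π (Submodule.Quotient.mk (c • w)) := by
        rw [← hz]
      rw [this, hπ, Submodule.mapQ_apply, LinearMap.id_apply,
        Submodule.Quotient.mk_eq_zero]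
      exact smul_mem_pointwise_smul _ c ⊤ trivial
  have hsurj : Function.Surjective π := by
    intro x
    obtain ⟨u, rfl⟩ := Submodule.Quotient.mk_surjective _ x
    exact ⟨Submodule.Quotient.mk u, by rw [hπ, Submodule.mapQ_apply, LinearMap.id_apply]⟩
  exact wr_of_exact bs _ _ _ φ π hinj hexact hsurj ha2 hc2

/-- Weak regularity is preserved by multiplying the head by a unit. -/
lemma wr_unit_mul {M : Type v} [AddCommGroup M] [Module R M] {u a : R} {bs : List R}
    (hu : IsUnit u) (h : IsWeaklyRegular M (a :: bs)) :
    IsWeaklyRegular M ((u * a) :: bs) := by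
  rw [isWeaklyRegular_cons_iff] at h ⊢
  obtain ⟨h1, h2⟩ := h
  have hu' : IsSMulRegular M u := by
    obtain ⟨w, rfl⟩ := hu
    intro x y hxy
    have : w⁻¹ • ((w : R) • x) = w⁻¹ • ((w : R) • y) := congrArg _ hxy
    simpa [← Units.smul_def, inv_smul_smul] using this
  have hs : ((u * a) • ⊤ : Submodule R M) = a • ⊤ := by
    rw [← Submodule.ideal_span_singleton_smul, ← Submodule.ideal_span_singleton_smul (r := a),
      Ideal.span_singleton_mul_left_unit hu]
  exact ⟨hu'.mul h1, ((Submodule.quotEquivOfEq _ _ hs).isWeaklyRegular_congr bs).mpr h2⟩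

end Aux

open MvPolynomial


/-- weighted version of `fpoly` -/
noncomputable def wf (n : ℕ) (h : ℕ → ℕ) (c : ℕ → ℕ → ℚ) (m : ℕ) :
    MvPolynomial (Fin n) ℚ :=
  ∑ k ∈ Finset.Icc 1 m, C (c m k) * xv n k * ∏ l ∈ Finset.Icc (m+1) (h m), (xv n k - xv n l)

lemma xv_def (n k : ℕ) (h2 : k - 1 < n) : xv n k = X ⟨k - 1, h2⟩ := dif_pos h2

lemma constantCoeff_xv (n m : ℕ) : constantCoeff (xv n m) = 0 := by
  unfold xv; split <;> simp

/-- the substitution `x₁ ↦ a₀`, `x_{k} ↦ x_{k-1}` -/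
noncomputable def eps (n' : ℕ) (a₀ : MvPolynomial (Fin n') ℚ) :
    MvPolynomial (Fin (n'+1)) ℚ →+* MvPolynomial (Fin n') ℚ :=
  (Polynomial.evalRingHom a₀).comp (finSuccEquiv ℚ n').toRingEquiv.toRingHom

lemma eps_apply (n' : ℕ) (a₀ : MvPolynomial (Fin n') ℚ) (p : MvPolynomial (Fin (n'+1)) ℚ) :
    eps n' a₀ p = Polynomial.eval a₀ (finSuccEquiv ℚ n' p) := rfl

lemma eps_X0 (n' : ℕ) (a₀ : MvPolynomial (Fin n') ℚ) :
    eps n' a₀ (X 0) = a₀ := by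
  rw [eps_apply, finSuccEquiv_X_zero, Polynomial.eval_X]

lemma eps_Xsucc (n' : ℕ) (a₀ : MvPolynomial (Fin n') ℚ) (j : Fin n') :
    eps n' a₀ (X j.succ) = X j := by
  rw [eps_apply, finSuccEquiv_X_succ, Polynomial.eval_C]

lemma eps_C (n' : ℕ) (a₀ : MvPolynomial (Fin n') ℚ) (q : ℚ) :
    eps n' a₀ (C q) = C q := by
  have : (C q : MvPolynomial (Fin (n'+1)) ℚ) = algebraMap ℚ _ q := rfl
  rw [eps_apply, this, AlgEquiv.commutes]
  have : algebraMap ℚ (Polynomial (MvPolynomial (Fin n') ℚ)) q = Polynomial.C (C q) := rfl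
  rw [this, Polynomial.eval_C]

lemma eps_xv_one (n' : ℕ) (a₀ : MvPolynomial (Fin n') ℚ) :
    eps n' a₀ (xv (n'+1) 1) = a₀ := by
  rw [xv_def (n'+1) 1 (by omega)]
  have : (⟨1 - 1, by omega⟩ : Fin (n'+1)) = 0 := by ext; simp
  rw [this, eps_X0]

lemma eps_xv (n' : ℕ) (a₀ : MvPolynomial (Fin n') ℚ) (k : ℕ) (h1 : 2 ≤ k) (h2 : k ≤ n'+1) :
    eps n' a₀ (xv (n'+1) k) = xv n' (k-1) := by
  rw [xv_def (n'+1) k (by omega), xv_def n' (k-1) (by omega)]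
  have : (⟨k - 1, by omega⟩ : Fin (n'+1)) = Fin.succ ⟨k - 1 - 1, by omega⟩ := by
    ext; simp; omega
  rw [this, eps_Xsucc]

/-- new weights after substitution -/
noncomputable def cnew (ℓ₀ : ℕ) (c : ℕ → ℕ → ℚ) : ℕ → ℕ → ℚ := fun m' k' =>
  c (m'+1) (k'+1) + if (k'+1 = ℓ₀ ∧ ℓ₀ ≤ m'+1 ∧ 2 ≤ ℓ₀) then c (m'+1) 1 else 0

lemma icc_shift_sum {β : Type*} [AddCommMonoid β] (f : ℕ → β) (lo hi : ℕ) :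
    ∑ k ∈ Finset.Icc (lo + 1) (hi + 1), f k = ∑ k ∈ Finset.Icc lo hi, f (k + 1) := by
  rw [← Finset.map_add_right_Icc lo hi 1, Finset.sum_map]
  rfl

lemma icc_shift_prod {β : Type*} [CommMonoid β] (f : ℕ → β) (lo hi : ℕ) :
    ∏ k ∈ Finset.Icc (lo + 1) (hi + 1), f k = ∏ k ∈ Finset.Icc lo hi, f (k + 1) := by
  rw [← Finset.map_add_right_Icc lo hi 1, Finset.prod_map]
  rfl


lemma eps_wf (n' : ℕ) (h : ℕ → ℕ) (c : ℕ → ℕ → ℚ) (ℓ₀ : ℕ)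
    (hl1 : 1 ≤ ℓ₀) (hl2 : ℓ₀ ≤ h 1)
    (hess1 : ∀ m, 1 ≤ m → m ≤ n'+1 → m ≤ h m ∧ h m ≤ n'+1)
    (hmono : ∀ i j, 1 ≤ i → i ≤ j → j ≤ n'+1 → h i ≤ h j)
    (m : ℕ) (h2m : 2 ≤ m) (hmn : m ≤ n'+1) :
    eps n' (if 2 ≤ ℓ₀ then xv n' (ℓ₀ - 1) else 0) (wf (n'+1) h c m)
      = wf n' (fun t => h (t+1) - 1) (cnew ℓ₀ c) (m-1) := by
  set a₀ : MvPolynomial (Fin n') ℚ := if 2 ≤ ℓ₀ then xv n' (ℓ₀ - 1) else 0 with ha₀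
  have hhm1 : m ≤ h m := (hess1 m (by omega) hmn).1
  have hhm2 : h m ≤ n'+1 := (hess1 m (by omega) hmn).2
  have hl2m : ℓ₀ ≤ h m := le_trans hl2 (hmono 1 m (by omega) (by omega) hmn)
  have hprod : ∀ y : MvPolynomial (Fin n') ℚ,
      (∏ l ∈ Finset.Icc (m+1) (h m), (y - eps n' a₀ (xv (n'+1) l)))
        = ∏ l' ∈ Finset.Icc m (h m - 1), (y - xv n' l') := by
    intro y
    have h1 : Finset.Icc (m+1) (h m) = Finset.Icc (m+1) ((h m - 1) + 1) := by
      congr 1; omega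
    rw [h1, icc_shift_prod (fun l => (y - eps n' a₀ (xv (n'+1) l))) m (h m - 1)]
    apply Finset.prod_congr rfl
    intro l hl
    rw [Finset.mem_Icc] at hl
    rw [eps_xv n' a₀ (l+1) (by omega) (by omega)]
    simp only [Nat.add_sub_cancel]
  -- expand LHS
  rw [wf, map_sum]
  have hsplit : Finset.Icc 1 m = insert 1 (Finset.Icc 2 m) := by
    ext x; simp [Finset.mem_Icc, Finset.mem_insert]; omega
  rw [hsplit, Finset.sum_insert (by simp)]
  -- the k ≥ 2 part
  have hIcc2 : Finset.Icc 2 m = Finset.Icc (1+1) ((m-1)+1) := by congr 1; omega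
  have hmain : (∑ k ∈ Finset.Icc 2 m, eps n' a₀
        (C (c m k) * xv (n'+1) k * ∏ l ∈ Finset.Icc (m+1) (h m), (xv (n'+1) k - xv (n'+1) l)))
      = ∑ k' ∈ Finset.Icc 1 (m-1), C (c m (k'+1)) * xv n' k' *
          ∏ l' ∈ Finset.Icc m (h m - 1), (xv n' k' - xv n' l') := by
    rw [hIcc2, icc_shift_sum]
    apply Finset.sum_congr rfl
    intro k hk
    rw [Finset.mem_Icc] at hk
    show eps n' a₀ (C (c m (k+1)) * xv (n'+1) (k+1) * ∏ l ∈ Finset.Icc (m+1) (h m),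
        (xv (n'+1) (k+1) - xv (n'+1) l)) = _
    rw [map_mul, map_mul, eps_C, eps_xv n' a₀ (k+1) (by omega) (by omega), map_prod]
    have hfactors : (∏ l ∈ Finset.Icc (m+1) (h m), eps n' a₀ (xv (n'+1) (k+1) - xv (n'+1) l))
        = ∏ l ∈ Finset.Icc (m+1) (h m), (xv n' k - eps n' a₀ (xv (n'+1) l)) := by
      apply Finset.prod_congr rfl
      intro l hl
      rw [map_sub, eps_xv n' a₀ (k+1) (by omega) (by omega)]
      simp only [Nat.add_sub_cancel]
    rw [hfactors, hprod (xv n' k)]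
    simp only [Nat.add_sub_cancel]
  rw [hmain]
  -- expand RHS
  have hm1 : (m-1)+1 = m := by omega
  have hRHS : wf n' (fun t => h (t+1) - 1) (cnew ℓ₀ c) (m-1)
      = (∑ k' ∈ Finset.Icc 1 (m-1), C (c m (k'+1)) * xv n' k' *
          ∏ l' ∈ Finset.Icc m (h m - 1), (xv n' k' - xv n' l'))
        + ∑ k' ∈ Finset.Icc 1 (m-1),
            C (if (k'+1 = ℓ₀ ∧ ℓ₀ ≤ m ∧ 2 ≤ ℓ₀) then c m 1 else 0) * xv n' k' *
              ∏ l' ∈ Finset.Icc m (h m - 1), (xv n' k' - xv n' l') := by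
    rw [wf, ← Finset.sum_add_distrib]
    apply Finset.sum_congr rfl
    intro k' hk'
    show C (cnew ℓ₀ c (m-1) k') * xv n' k' *
        ∏ l' ∈ Finset.Icc ((m-1)+1) (h ((m-1)+1) - 1), (xv n' k' - xv n' l') = _
    rw [hm1, cnew]
    simp only [hm1]
    rw [map_add, add_mul, add_mul]
  rw [hRHS, add_comm]
  congr 1
  -- remaining: the image of the k = 1 term equals the ite-sum
  rw [map_mul, map_mul, eps_C, eps_xv_one, map_prod]
  have hfactors1 : (∏ l ∈ Finset.Icc (m+1) (h m), eps n' a₀ (xv (n'+1) 1 - xv (n'+1) l))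
      = ∏ l ∈ Finset.Icc (m+1) (h m), (a₀ - eps n' a₀ (xv (n'+1) l)) := by
    apply Finset.prod_congr rfl
    intro l hl
    rw [map_sub, eps_xv_one]
  rw [hfactors1, hprod a₀]
  by_cases hc2 : 2 ≤ ℓ₀
  · by_cases hcm : ℓ₀ ≤ m
    · rw [Finset.sum_eq_single_of_mem (ℓ₀ - 1)
        (Finset.mem_Icc.mpr ⟨by omega, by omega⟩)
        (fun b hb hne => by
          rw [if_neg (by
            rintro ⟨hb1, -, -⟩
            exact hne (by omega)), map_zero, zero_mul, zero_mul])]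
      rw [if_pos ⟨by omega, hcm, hc2⟩]
      rw [ha₀, if_pos hc2]
    · rw [Finset.sum_eq_zero (fun b hb => by
        rw [if_neg (by rintro ⟨-, hb2, -⟩; exact hcm hb2), map_zero, zero_mul, zero_mul])]
      have hmem : ℓ₀ - 1 ∈ Finset.Icc m (h m - 1) := Finset.mem_Icc.mpr ⟨by omega, by omega⟩
      rw [Finset.prod_eq_zero hmem (by rw [ha₀, if_pos hc2]; exact sub_self _), mul_zero]
  · rw [Finset.sum_eq_zero (fun b hb => by
      rw [if_neg (by rintro ⟨-, -, hb3⟩; exact hc2 hb3), map_zero, zero_mul, zero_mul])]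
    rw [ha₀, if_neg hc2, mul_zero, zero_mul]

set_option maxHeartbeats 1000000 in
open RingTheory.Sequence in
theorem wf_wr : ∀ (n : ℕ) (h : ℕ → ℕ) (c : ℕ → ℕ → ℚ),
    (∀ m, 1 ≤ m → m ≤ n → m ≤ h m ∧ h m ≤ n) →
    (∀ m, 1 ≤ m → m < n → h m ≤ h (m+1)) →
    (∀ m k, 1 ≤ k → k ≤ m → m ≤ n → 0 < c m k) →
    IsWeaklyRegular (MvPolynomial (Fin n) ℚ)
      (List.ofFn fun k : Fin n => wf n h c (k.val+1)) := by
  intro n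
  induction n with
  | zero =>
    intro h c _ _ _
    simp only [List.ofFn_zero]
    exact IsWeaklyRegular.nil _ _
  | succ n' IH =>
    intro h c hess1 hess2 hpos
    have hmono : ∀ i j, 1 ≤ i → i ≤ j → j ≤ n'+1 → h i ≤ h j := by
      intro i j
      induction j with
      | zero => intro h1 h2 _; exact absurd h2 (by omega)
      | succ jj ihj =>
        intro h1 hij hjn
        rcases Nat.eq_or_lt_of_le hij with heq | hlt
        · rw [heq]
        · exact le_trans (ihj h1 (by omega) (by omega)) (hess2 jj (by omega) (by omega))
    have h11 : 1 ≤ h 1 := (hess1 1 (by omega) (by omega)).1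
    have h1n : h 1 ≤ n'+1 := (hess1 1 (by omega) (by omega)).2
    simp only [List.ofFn_succ, Fin.val_zero, Fin.val_succ, zero_add]
    set tail := List.ofFn fun i : Fin n' => wf (n'+1) h c (i.val + 1 + 1) with htail
    -- Step 1: each linear factor, followed by the tail, is weakly regular
    have factor : ∀ ℓ₀, 1 ≤ ℓ₀ → ℓ₀ ≤ h 1 →
        IsWeaklyRegular (MvPolynomial (Fin (n'+1)) ℚ)
          ((xv (n'+1) 1 - (if 2 ≤ ℓ₀ then xv (n'+1) ℓ₀ else 0)) :: tail) := by
      intro ℓ₀ hl1 hl2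
      set a₀ : MvPolynomial (Fin n') ℚ := if 2 ≤ ℓ₀ then xv n' (ℓ₀ - 1) else 0 with ha₀
      set c₀ : MvPolynomial (Fin (n'+1)) ℚ :=
        xv (n'+1) 1 - (if 2 ≤ ℓ₀ then xv (n'+1) ℓ₀ else 0) with hc₀
      have hc₀ne : c₀ ≠ 0 := by
        rw [hc₀, xv_def (n'+1) 1 (by omega)]
        by_cases h2 : 2 ≤ ℓ₀
        · rw [if_pos h2, xv_def (n'+1) ℓ₀ (by omega)]
          refine sub_ne_zero_of_ne ?_
          intro heq
          have h3 := MvPolynomial.X_injective heq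
          have h4 : (1:ℕ) - 1 = ℓ₀ - 1 := congrArg Fin.val h3
          omega
        · rw [if_neg h2, sub_zero]
          exact MvPolynomial.X_ne_zero _
      have hreg : IsSMulRegular (MvPolynomial (Fin (n'+1)) ℚ) c₀ := by
        intro x y hxy
        change c₀ • x = c₀ • y at hxy
        rw [smul_eq_mul, smul_eq_mul] at hxy
        exact mul_left_cancel₀ hc₀ne hxy
      rw [isWeaklyRegular_cons_iff]
      refine ⟨hreg, ?_⟩
      have hΦ : finSuccEquiv ℚ n' c₀ = Polynomial.X - Polynomial.C a₀ := by
        rw [hc₀, map_sub, xv_def (n'+1) 1 (by omega)]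
        have h0 : (⟨1-1, by omega⟩ : Fin (n'+1)) = 0 := by ext; simp
        rw [h0, finSuccEquiv_X_zero]
        congr 1
        by_cases h2 : 2 ≤ ℓ₀
        · rw [if_pos h2, xv_def (n'+1) ℓ₀ (by omega), ha₀, if_pos h2,
            xv_def n' (ℓ₀-1) (by omega)]
          have h5 : (⟨ℓ₀-1, by omega⟩ : Fin (n'+1)) = Fin.succ ⟨ℓ₀-1-1, by omega⟩ := by
            ext; simp; omega
          rw [h5, finSuccEquiv_X_succ]
        · rw [if_neg h2, ha₀, if_neg h2]
          simp
      have heqsub : (c₀ • ⊤ : Submodule (MvPolynomial (Fin (n'+1)) ℚ)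
          (MvPolynomial (Fin (n'+1)) ℚ)) = (Ideal.span {c₀}) := by
        rw [← Submodule.ideal_span_singleton_smul, Ideal.smul_eq_mul, Ideal.mul_top]
      set e₃ := Submodule.quotEquivOfEq _ _ heqsub with he₃
      set e₂ : (MvPolynomial (Fin (n'+1)) ℚ ⧸ Ideal.span {c₀}) ≃+* MvPolynomial (Fin n') ℚ :=
        (Ideal.quotientEquiv (Ideal.span {c₀})
          (Ideal.span {Polynomial.X - Polynomial.C a₀})
          (finSuccEquiv ℚ n').toRingEquiv
          (by rw [Ideal.map_span, Set.image_singleton]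
              congr 1
              exact hΦ.symm ▸ rfl)).trans
          (Polynomial.quotientSpanXSubCAlgEquiv a₀).toRingEquiv with he₂
      have he₂mk : ∀ p, e₂ (Ideal.Quotient.mk (Ideal.span {c₀}) p) = eps n' a₀ p := by
        intro p
        rw [he₂, RingEquiv.trans_apply, Ideal.quotientEquiv_mk]
        have : ((finSuccEquiv ℚ n').toRingEquiv : MvPolynomial (Fin (n'+1)) ℚ →
            Polynomial (MvPolynomial (Fin n') ℚ)) p = finSuccEquiv ℚ n' p := rfl
        rw [this]
        have h6 : ((Polynomial.quotientSpanXSubCAlgEquiv a₀).toRingEquiv)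
            (Ideal.Quotient.mk _ (finSuccEquiv ℚ n' p))
            = Polynomial.eval a₀ (finSuccEquiv ℚ n' p) :=
          Polynomial.quotientSpanXSubCAlgEquiv_mk a₀ _
        rw [h6, eps_apply]
      -- the tail mapped into the smaller ring is a new instance
      have hquot : IsWeaklyRegular (MvPolynomial (Fin n') ℚ) (tail.map (eps n' a₀)) := by
        rw [htail, List.map_ofFn]
        have hfun : ((eps n' a₀) ∘ fun i : Fin n' => wf (n'+1) h c (i.val + 1 + 1))
            = fun i : Fin n' => wf n' (fun t => h (t+1) - 1) (cnew ℓ₀ c) (i.val + 1) := by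
          funext i
          show eps n' a₀ (wf (n'+1) h c (i.val + 1 + 1)) = _
          have := eps_wf n' h c ℓ₀ hl1 hl2 hess1 hmono (i.val + 1 + 1) (by omega) (by omega)
          rw [ha₀]
          rw [this]
          congr 1
        rw [hfun]
        refine IH (fun t => h (t+1) - 1) (cnew ℓ₀ c) ?_ ?_ ?_
        · intro m h1 h2
          show m ≤ h (m+1) - 1 ∧ h (m+1) - 1 ≤ n'
          have := hess1 (m+1) (by omega) (by omega)
          omega
        · intro m h1 h2
          show h (m+1) - 1 ≤ h (m+1+1) - 1
          have := hess2 (m+1) (by omega) (by omega)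
          omega
        · intro m k h1 h2 h3
          have hbase := hpos (m+1) (k+1) (by omega) (by omega) (by omega)
          have hone := hpos (m+1) 1 (by omega) (by omega) (by omega)
          rw [cnew]
          split
          · exact add_pos hbase hone
          · simpa using hbase
      -- transport along the additive equivalence
      have hrel : List.Forall₂ (fun r s => ∀ x : QuotSMulTop c₀ (MvPolynomial (Fin (n'+1)) ℚ),
          (e₃.toAddEquiv.trans e₂.toAddEquiv) (r • x) = s • (e₃.toAddEquiv.trans e₂.toAddEquiv) x)
          tail (tail.map (eps n' a₀)) := by
        rw [List.forall₂_map_right_iff]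
        rw [List.forall₂_same]
        intro r hr x
        obtain ⟨y, rfl⟩ := Submodule.Quotient.mk_surjective _ x
        have key : ∀ z : MvPolynomial (Fin (n'+1)) ℚ,
            (e₃.toAddEquiv.trans e₂.toAddEquiv) (Submodule.Quotient.mk z) = eps n' a₀ z := by
          intro z
          rw [AddEquiv.trans_apply]
          have h7 : e₃.toAddEquiv (Submodule.Quotient.mk z)
              = (Submodule.Quotient.mk z : MvPolynomial (Fin (n'+1)) ℚ ⧸
                  (Ideal.span {c₀} : Ideal (MvPolynomial (Fin (n'+1)) ℚ))) := by
            rw [he₃]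
            show (Submodule.quotEquivOfEq
                (c₀ • (⊤ : Submodule (MvPolynomial (Fin (n'+1)) ℚ) (MvPolynomial (Fin (n'+1)) ℚ)))
                (Ideal.span {c₀}) heqsub)
              (Submodule.Quotient.mk z) = _
            exact Submodule.quotEquivOfEq_mk _ _ heqsub z
          rw [h7]
          exact he₂mk z
        rw [← Submodule.Quotient.mk_smul, key, key, smul_eq_mul, smul_eq_mul, map_mul]
      exact (AddEquiv.isWeaklyRegular_congr hrel).mpr hquot
    -- Step 2: products of the factors
    have base : ∀ s : Finset ℕ, (∀ l ∈ s, 2 ≤ l ∧ l ≤ h 1) →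
        IsWeaklyRegular (MvPolynomial (Fin (n'+1)) ℚ)
          ((xv (n'+1) 1 * ∏ l ∈ s, (xv (n'+1) 1 - xv (n'+1) l)) :: tail) := by
      intro s
      induction s using Finset.induction_on with
      | empty =>
        intro _
        have hf := factor 1 (le_refl 1) h11
        rw [if_neg (by omega), sub_zero] at hf
        rw [Finset.prod_empty, mul_one]
        exact hf
      | @insert l s hls ih =>
        intro hsub
        have hmem := hsub l (Finset.mem_insert_self _ _)
        rw [Finset.prod_insert hls]
        have heq : xv (n'+1) 1 * ((xv (n'+1) 1 - xv (n'+1) l) *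
              ∏ l' ∈ s, (xv (n'+1) 1 - xv (n'+1) l'))
            = (xv (n'+1) 1 - xv (n'+1) l) *
              (xv (n'+1) 1 * ∏ l' ∈ s, (xv (n'+1) 1 - xv (n'+1) l')) := by
          ring
        rw [heq]
        have hf := factor l (by omega) hmem.2
        rw [if_pos hmem.1] at hf
        exact wr_mul hf (ih (fun l' hl' => hsub l' (Finset.mem_insert_of_mem hl')))
    -- Step 3: the first entry is a unit multiple of such a product
    have hhead : wf (n'+1) h c 1
        = C (c 1 1) * (xv (n'+1) 1 * ∏ l ∈ Finset.Icc 2 (h 1), (xv (n'+1) 1 - xv (n'+1) l)) := by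
      rw [wf, Finset.Icc_self, Finset.sum_singleton, mul_assoc]
    rw [hhead]
    refine wr_unit_mul ?_ (base (Finset.Icc 2 (h 1)) (fun l hl => by
      rw [Finset.mem_Icc] at hl; exact ⟨hl.1, hl.2⟩))
    exact IsUnit.map C (isUnit_iff_ne_zero.mpr (ne_of_gt (hpos 1 1 (le_refl 1) (le_refl 1) (by omega))))

lemma constantCoeff_wf (n : ℕ) (h : ℕ → ℕ) (c : ℕ → ℕ → ℚ) (m : ℕ) :
    constantCoeff (wf n h c m) = 0 := by
  rw [wf, map_sum]
  apply Finset.sum_eq_zero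
  intro k hk
  rw [map_mul, map_mul, constantCoeff_xv, mul_zero, zero_mul]

lemma ofList_le_ker (n : ℕ) : ∀ (L : List (MvPolynomial (Fin n) ℚ)),
    (∀ p ∈ L, constantCoeff p = 0) →
    Ideal.ofList L ≤ RingHom.ker (constantCoeff : MvPolynomial (Fin n) ℚ →+* ℚ) := by
  intro L
  induction L with
  | nil => intro _; rw [Ideal.ofList_nil]; exact bot_le
  | cons p L ih =>
    intro hall
    rw [Ideal.ofList_cons]
    apply sup_le
    · rw [Ideal.span_le]
      intro q hq
      rw [Set.mem_singleton_iff] at hq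
      subst hq
      exact hall q List.mem_cons_self
    · exact ih (fun q hq => hall q (List.mem_cons_of_mem _ hq))

theorem fpoly_regular_sequence (n : ℕ) (hn : 1 ≤ n) (h : ℕ → ℕ)
    (hh : IsHessenberg n h) :
    RingTheory.Sequence.IsRegular (MvPolynomial (Fin n) ℚ)
      (List.ofFn fun k : Fin n => fpoly n (h (k.val + 1)) (k.val + 1)) := by
  have hlist : (List.ofFn fun k : Fin n => fpoly n (h (k.val + 1)) (k.val + 1))
      = List.ofFn fun k : Fin n => wf n h (fun _ _ => 1) (k.val + 1) := by
    refine congrArg List.ofFn ?_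
    funext k
    rw [fpoly, wf]
    apply Finset.sum_congr rfl
    intro j hj
    rw [map_one, one_mul, mul_comm]
  rw [hlist]
  refine ⟨wf_wr n h (fun _ _ => 1) hh.1 hh.2 (fun _ _ _ _ _ => one_pos), ?_⟩
  intro htop
  have h1mem : (1 : MvPolynomial (Fin n) ℚ) ∈
      (Ideal.ofList (List.ofFn fun k : Fin n => wf n h (fun _ _ => 1) (k.val + 1)) •
        (⊤ : Submodule (MvPolynomial (Fin n) ℚ) (MvPolynomial (Fin n) ℚ))) :=
    htop ▸ Submodule.mem_top
  rw [Ideal.smul_eq_mul, Ideal.mul_top] at h1mem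
  have hker := ofList_le_ker n _ (fun p hp => by
    obtain ⟨i, rfl⟩ := List.mem_ofFn.mp hp
    exact constantCoeff_wf n h (fun _ _ => 1) (i.val + 1)) h1mem
  rw [RingHom.mem_ker, map_one] at hker
  exact one_ne_zero hker
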